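/- Let V be a finite-dimensional real vector space, g a nondegenerate symmetric bilinear form on V, b an alternating bilinear form on V and A ∈ V*. Define I : E(V) → E(V) by I(X + η + μ) = X + (η − b(X,·) − A(X)A + 2μA) + (μ − A(X)) for X ∈ V, η ∈ V*, μ ∈ ℝ. Then I is a linear isomorphism satisfying ⟨I(e), I(e')⟩ = ⟨e, e'⟩ for all e, e' ∈ E(V), and I maps the subspace E₋ = {X − (g−b)(X,·) − A(X)A + A(X) : X ∈ V} onto the subspace {X − g(X,·) : X ∈ V}. -/

import Mathlib

/-- The odd generalized tangent space `E(V) = V ⊕ V* ⊕ ℝ`. -/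
abbrev EV (V : Type*) [AddCommGroup V] [Module ℝ V] : Type _ :=
  V × (V →ₗ[ℝ] ℝ) × ℝ

/-- The canonical scalar product of `E(V)`:
`⟨X+ξ+λ, Y+η+μ⟩ = (1/2)(η(X)+ξ(Y)) + λμ`. -/
noncomputable def spEV {V : Type*} [AddCommGroup V] [Module ℝ V]
    (p q : EV V) : ℝ :=
  (1 / 2) * (q.2.1 p.1 + p.2.1 q.1) + p.2.2 * q.2.2

/-- Lemma 2.2 (fiberwise): the map
`I(X + η + μ) = X + (η − b(X,·) − A(X)A + 2μA) + (μ − A(X))`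
is a linear isomorphism of `E(V)` preserving `⟨·,·⟩` and mapping
`E₋ = {X − (g−b)(X,·) − A(X)A + A(X)}` onto `{X − g(X,·)}`. -/
theorem stmt_2 {V : Type*} [AddCommGroup V] [Module ℝ V] [FiniteDimensional ℝ V]
    (g : LinearMap.BilinForm ℝ V)
    (hgsymm : ∀ x y, g x y = g y x)
    (hgnd : ∀ x, (∀ y, g x y = 0) → x = 0)
    (b : LinearMap.BilinForm ℝ V)
    (hbalt : ∀ x, b x x = 0)
    (A : V →ₗ[ℝ] ℝ) :
    ∃ I : EV V ≃ₗ[ℝ] EV V,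
      (∀ (X : V) (η : V →ₗ[ℝ] ℝ) (μ : ℝ),
        I (X, η, μ) = (X, η - b X - A X • A + (2 * μ) • A, μ - A X)) ∧
      (∀ p q : EV V, spEV (I p) (I q) = spEV p q) ∧
      (fun p => I p) '' {p : EV V | ∃ X : V, p = (X, b X - g X - A X • A, A X)}
        = {p : EV V | ∃ X : V, p = (X, -(g X), 0)} := by
  have hbskew : ∀ x y, b x y = - b y x := by
    intro x y
    have h := hbalt (x + y)
    simp only [map_add, LinearMap.add_apply, hbalt] at h
    linarith
  refine ⟨{
    toFun := fun p => (p.1, p.2.1 - b p.1 - A p.1 • A + (2 * p.2.2) • A, p.2.2 - A p.1)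
    invFun := fun p => (p.1, p.2.1 + b p.1 + A p.1 • A - (2 * (p.2.2 + A p.1)) • A, p.2.2 + A p.1)
    map_add' := by
      intro p q
      refine Prod.ext rfl (Prod.ext ?_ ?_)
      · ext v; simp [map_add]; ring
      · simp [map_add]; ring
    map_smul' := by
      intro c p
      refine Prod.ext rfl (Prod.ext ?_ ?_)
      · ext v; simp [map_smul]; ring
      · simp [map_smul]; ring
    left_inv := by
      intro p
      refine Prod.ext rfl (Prod.ext ?_ ?_)
      · ext v; simp; ring
      · simp
    right_inv := by
      intro p
      refine Prod.ext rfl (Prod.ext ?_ ?_)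
      · ext v; simp; ring
      · simp }, ?_, ?_, ?_⟩
  · intro X η μ; rfl
  · intro p q
    simp only [LinearEquiv.coe_mk, spEV]
    simp only [LinearMap.coe_mk, AddHom.coe_mk, LinearMap.sub_apply, LinearMap.add_apply, LinearMap.smul_apply, smul_eq_mul]
    have := hbskew q.1 p.1
    nlinarith [this]
  · ext p
    constructor
    · rintro ⟨q, ⟨X, rfl⟩, rfl⟩
      refine ⟨X, ?_⟩
      simp only [LinearEquiv.coe_mk]
      refine Prod.ext rfl (Prod.ext ?_ ?_)
      · ext v; simp; ring
      · simp
    · rintro ⟨X, rfl⟩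
      refine ⟨(X, b X - g X - A X • A, A X), ⟨X, rfl⟩, ?_⟩
      simp only [LinearEquiv.coe_mk]
      refine Prod.ext rfl (Prod.ext ?_ ?_)
      · ext v; simp; ring
      · simp
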